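/- Assume the functions {x ↦ exp(αᵀx)}_{α∈𝒜} are linearly independent on X. Then the circuit graph G_X(𝒜) is a closed subset of ℝ^𝒜 × ℝ. -/

import Mathlib

open Finset

/-- Dot product on `Fin n → ℝ`. -/
noncomputable def dotp {n : ℕ} (y x : Fin n → ℝ) : ℝ := ∑ i, y i * x i

/-- Support function `σ_X : ℝⁿ → ℝ ∪ {±∞}` of a set `X ⊆ ℝⁿ`. -/
noncomputable def suppFn {n : ℕ} (X : Set (Fin n → ℝ)) (y : Fin n → ℝ) : EReal :=
  ⨆ x ∈ X, ((dotp y x : ℝ) : EReal)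

/-- The linear map `𝒜 : ℝ^𝒜 → ℝⁿ`, `ν ↦ Σ_α ν_α α`. -/
noncomputable def Amap {n m : ℕ} (A : Fin m → Fin n → ℝ) (ν : Fin m → ℝ) : Fin n → ℝ :=
  fun j => ∑ i, ν i * A i j

/-- `N_β = {ν : ν_α ≥ 0 (α ≠ β), Σ ν_α = 0}`. -/
def Nbeta {m : ℕ} (b : Fin m) : Set (Fin m → ℝ) :=
  {ν | (∀ i, i ≠ b → 0 ≤ ν i) ∧ ∑ i, ν i = 0}

/-- Two vectors are proportional if one is a scalar multiple of the other. -/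
def Proportional {m : ℕ} (u v : Fin m → ℝ) : Prop :=
  ∃ t : ℝ, u = t • v ∨ v = t • u

/-- The augmented support function `ν ↦ σ_X(-𝒜ν)`. -/
noncomputable def sigA {n m : ℕ} (X : Set (Fin n → ℝ)) (A : Fin m → Fin n → ℝ)
    (ν : Fin m → ℝ) : EReal :=
  suppFn X (-(Amap A ν))

/-- The map `ν ↦ σ_X(-𝒜ν)` is affine on the segment `[ν1, ν2]`. -/
def SigmaAffineOnSeg {n m : ℕ} (X : Set (Fin n → ℝ)) (A : Fin m → Fin n → ℝ)
    (ν1 ν2 : Fin m → ℝ) : Prop :=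
  ∀ t : ℝ, t ∈ Set.Icc (0:ℝ) 1 →
    sigA X A (t • ν1 + (1 - t) • ν2) =
      (t : EReal) * sigA X A ν1 + ((1 - t : ℝ) : EReal) * sigA X A ν2

/-- `ν` is an `X`-circuit of `𝒜` (with negative index allowed only at `b`). -/
def IsXCircuit {n m : ℕ} (X : Set (Fin n → ℝ)) (A : Fin m → Fin n → ℝ)
    (b : Fin m) (ν : Fin m → ℝ) : Prop :=
  ν ∈ Nbeta b ∧ ν ≠ 0 ∧ sigA X A ν < ⊤ ∧
  ¬ ∃ (ν1 ν2 : Fin m → ℝ) (θ : ℝ), ν1 ∈ Nbeta b ∧ ν2 ∈ Nbeta b ∧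
      ¬ Proportional ν1 ν2 ∧ θ ∈ Set.Ioo (0:ℝ) 1 ∧
      ν = θ • ν1 + (1 - θ) • ν2 ∧ SigmaAffineOnSeg X A ν1 ν2

/-- All finite nonnegative combinations of elements of `S` (including `0`). -/
def coneHull {E : Type*} [AddCommMonoid E] [SMul ℝ E] (S : Set E) : Set E :=
  {x | ∃ (k : ℕ) (t : Fin k → ℝ) (v : Fin k → E),
    (∀ j, 0 ≤ t j) ∧ (∀ j, v j ∈ S) ∧ x = ∑ j, t j • v j}

/-- `v` is an edge generator of the convex cone `K`. -/
def IsEdgeGenerator {E : Type*} [AddCommMonoid E] [SMul ℝ E] (K : Set E) (v : E) : Prop :=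
  v ≠ 0 ∧ v ∈ K ∧ ∀ u ∈ K, ∀ w ∈ K, v = u + w →
    (∃ a : ℝ, 0 ≤ a ∧ u = a • v) ∧ (∃ b : ℝ, 0 ≤ b ∧ w = b • v)

/-- The `X`-AGE cone `C_X(𝒜, β)`, as a cone of coefficient vectors. -/
def AgeCone {n m : ℕ} (X : Set (Fin n → ℝ)) (A : Fin m → Fin n → ℝ) (b : Fin m) :
    Set (Fin m → ℝ) :=
  {c | (∀ i, i ≠ b → 0 ≤ c i) ∧ ∀ x ∈ X, 0 ≤ ∑ i, c i * Real.exp (dotp (A i) x)}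

/-- The `X`-SAGE cone `C_X(𝒜) = Σ_β C_X(𝒜, β)`. -/
def Sage {n m : ℕ} (X : Set (Fin n → ℝ)) (A : Fin m → Fin n → ℝ) : Set (Fin m → ℝ) :=
  {c | ∃ f : Fin m → (Fin m → ℝ), (∀ b, f b ∈ AgeCone X A b) ∧ c = ∑ b, f b}

/-- One summand of the relative entropy, with the conventions `0·log 0 = 0` and
`D = ∞` if `a > 0` while `c ≤ 0`. -/
noncomputable def relEnt (a c : ℝ) : EReal :=
  if a = 0 then 0 else if 0 < c then ((a * Real.log (a / c) : ℝ) : EReal) else ⊤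

/-- The relative entropy `D(ν_{∖β}, e · c_{∖β})`. -/
noncomputable def relEntSum {m : ℕ} (b : Fin m) (ν c : Fin m → ℝ) : EReal :=
  ∑ i ∈ Finset.univ.erase b, relEnt (ν i) (Real.exp 1 * c i)

/-- Condition (★): `ν ∈ N_β`, `ν ≠ 0`, `σ_X(-𝒜ν) + D(ν_{∖β}, e c_{∖β}) ≤ c_β`. -/
def StarCond {n m : ℕ} (X : Set (Fin n → ℝ)) (A : Fin m → Fin n → ℝ)
    (b : Fin m) (c ν : Fin m → ℝ) : Prop :=
  ν ∈ Nbeta b ∧ ν ≠ 0 ∧ sigA X A ν + relEntSum b ν c ≤ (c b : EReal)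

/-- The `λ`-witnessed AGE cone `C_X(𝒜, λ)` for a normalized `λ` with `λ_β = -1`. -/
noncomputable def WitnessCone {n m : ℕ} (X : Set (Fin n → ℝ)) (A : Fin m → Fin n → ℝ)
    (b : Fin m) (l : Fin m → ℝ) : Set (Fin m → ℝ) :=
  {c | (∀ i, i ≠ b → 0 ≤ c i) ∧
    (-(c b)) * Real.exp ((sigA X A l).toReal) ≤
      ∏ i ∈ Finset.univ.filter (fun i => 0 < l i), (c i / l i) ^ (l i)}

/-- Normalized `X`-circuits in `N_β`. -/
def LambdaB {n m : ℕ} (X : Set (Fin n → ℝ)) (A : Fin m → Fin n → ℝ) (b : Fin m) :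
    Set (Fin m → ℝ) :=
  {l | IsXCircuit X A b l ∧ l b = -1}

/-- All normalized `X`-circuits of `𝒜`. -/
def Lambda {n m : ℕ} (X : Set (Fin n → ℝ)) (A : Fin m → Fin n → ℝ) : Set (Fin m → ℝ) :=
  ⋃ b, LambdaB X A b

/-- Functional form `φ_λ = (λ, σ_X(-𝒜λ)) ∈ ℝ^𝒜 × ℝ`. -/
noncomputable def phiVec {n m : ℕ} (X : Set (Fin n → ℝ)) (A : Fin m → Fin n → ℝ)
    (l : Fin m → ℝ) : (Fin m → ℝ) × ℝ :=
  (l, (sigA X A l).toReal)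

/-- Functional form as an affine function `φ_λ(y) = Σ y_α λ_α + σ_X(-𝒜λ)`. -/
noncomputable def phiFun {n m : ℕ} (X : Set (Fin n → ℝ)) (A : Fin m → Fin n → ℝ)
    (l : Fin m → ℝ) (y : Fin m → ℝ) : ℝ :=
  (∑ i, y i * l i) + (sigA X A l).toReal

/-- The circuit graph `G_X(𝒜)`. -/
noncomputable def circuitGraph {n m : ℕ} (X : Set (Fin n → ℝ)) (A : Fin m → Fin n → ℝ) :
    Set ((Fin m → ℝ) × ℝ) :=
  coneHull ((phiVec X A '' Lambda X A) ∪ {((0 : Fin m → ℝ), (1 : ℝ))})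

/-- The reduced normalized `X`-circuits `Λ*_X(𝒜)`. -/
noncomputable def LambdaStar {n m : ℕ} (X : Set (Fin n → ℝ)) (A : Fin m → Fin n → ℝ) :
    Set (Fin m → ℝ) :=
  {l | l ∈ Lambda X A ∧ IsEdgeGenerator (circuitGraph X A) (phiVec X A l)}

/-- `λ`-witnessed AGE cone for a normalized circuit, with `β` recovered from `λ`. -/
noncomputable def WitnessConeL {n m : ℕ} (X : Set (Fin n → ℝ)) (A : Fin m → Fin n → ℝ)
    (l : Fin m → ℝ) : Set (Fin m → ℝ) :=
  ⋃ b ∈ {b : Fin m | l b = -1}, WitnessCone X A b l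

/-- Dual cone of a set of coefficient vectors in `ℝ^𝒜`. -/
def dualConeV {m : ℕ} (K : Set (Fin m → ℝ)) : Set (Fin m → ℝ) :=
  {v | ∀ c ∈ K, 0 ≤ ∑ i, v i * c i}

/-- Dual cone of a subset of `ℝ^𝒜 × ℝ`. -/
def dualConeP {m : ℕ} (K : Set ((Fin m → ℝ) × ℝ)) : Set ((Fin m → ℝ) × ℝ) :=
  {p | ∀ q ∈ K, 0 ≤ (∑ i, p.1 i * q.1 i) + p.2 * q.2}

/-- The basis functions `x ↦ exp(αᵀx)`, `α ∈ 𝒜`, are linearly independent on `X`. -/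
def ExpLinIndep {n m : ℕ} (X : Set (Fin n → ℝ)) (A : Fin m → Fin n → ℝ) : Prop :=
  LinearIndependent ℝ (fun i : Fin m => fun x : X => Real.exp (dotp (A i) (x : Fin n → ℝ)))

/-- `X` is a polyhedron: an intersection of finitely many closed halfspaces. -/
def IsPolyhedron {n : ℕ} (X : Set (Fin n → ℝ)) : Prop :=
  ∃ (k : ℕ) (a : Fin k → Fin n → ℝ) (bb : Fin k → ℝ),
    X = {x | ∀ i, dotp (a i) x ≤ bb i}

/-- Minkowski sum `Σ_{l ∈ Λ} C(l)` (finite sums, one summand per `l`;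
the empty sum gives `{0}`). -/
def MinkSumOver {m : ℕ} (Λ : Set (Fin m → ℝ)) (C : (Fin m → ℝ) → Set (Fin m → ℝ)) :
    Set (Fin m → ℝ) :=
  {c | ∃ (s : Finset (Fin m → ℝ)) (f : (Fin m → ℝ) → (Fin m → ℝ)),
    (↑s ⊆ Λ) ∧ (∀ l ∈ s, f l ∈ C l) ∧ c = ∑ l ∈ s, f l}

-- auxiliary linear functional
noncomputable def auxg {n m : ℕ} (A : Fin m → Fin n → ℝ) (ν : Fin m → ℝ) (x : Fin n → ℝ) : ℝ :=
  ∑ i, ν i * dotp (A i) x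

lemma dotp_neg_Amap {n m : ℕ} (A : Fin m → Fin n → ℝ) (ν : Fin m → ℝ) (x : Fin n → ℝ) :
    dotp (-(Amap A ν)) x = -auxg A ν x := by
  simp only [dotp, auxg, Amap, Pi.neg_apply, neg_mul, ← Finset.sum_neg_distrib,
    Finset.sum_mul, Finset.mul_sum]
  rw [Finset.sum_comm]
  congr 1; ext i; congr 1; ext j; ring

lemma auxg_add {n m : ℕ} (A : Fin m → Fin n → ℝ) (ν ν' : Fin m → ℝ) (x : Fin n → ℝ) :
    auxg A (ν + ν') x = auxg A ν x + auxg A ν' x := by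
  simp [auxg, add_mul, Finset.sum_add_distrib]

lemma auxg_smul {n m : ℕ} (A : Fin m → Fin n → ℝ) (c : ℝ) (ν : Fin m → ℝ) (x : Fin n → ℝ) :
    auxg A (c • ν) x = c * auxg A ν x := by
  simp [auxg, Finset.mul_sum, mul_assoc]

lemma auxg_sum {n m : ℕ} (A : Fin m → Fin n → ℝ) (μ : Fin m → Fin m → ℝ) (x : Fin n → ℝ) :
    auxg A (∑ b, μ b) x = ∑ b, auxg A (μ b) x := by
  simp only [auxg, Finset.sum_apply, Finset.sum_mul]
  exact Finset.sum_comm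

lemma auxg_zero {n m : ℕ} (A : Fin m → Fin n → ℝ) (x : Fin n → ℝ) : auxg A 0 x = 0 := by
  simp [auxg]

lemma sigA_le_coe_iff {n m : ℕ} (X : Set (Fin n → ℝ)) (A : Fin m → Fin n → ℝ)
    (ν : Fin m → ℝ) (r : ℝ) :
    sigA X A ν ≤ (r : EReal) ↔ ∀ x ∈ X, dotp (-(Amap A ν)) x ≤ r := by
  simp only [sigA, suppFn, iSup_le_iff, EReal.coe_le_coe_iff]

lemma coe_dotp_le_sigA {n m : ℕ} (X : Set (Fin n → ℝ)) (A : Fin m → Fin n → ℝ)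
    (ν : Fin m → ℝ) {x : Fin n → ℝ} (hx : x ∈ X) :
    ((dotp (-(Amap A ν)) x : ℝ) : EReal) ≤ sigA X A ν := by
  exact le_iSup₂ (f := fun x (_ : x ∈ X) => ((dotp (-(Amap A ν)) x : ℝ) : EReal)) x hx

lemma sigA_ne_bot {n m : ℕ} {X : Set (Fin n → ℝ)} (hXne : X.Nonempty)
    (A : Fin m → Fin n → ℝ) (ν : Fin m → ℝ) : sigA X A ν ≠ ⊥ := by
  obtain ⟨x, hx⟩ := hXne
  intro h
  have := coe_dotp_le_sigA X A ν hx
  rw [h, le_bot_iff] at this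
  exact EReal.coe_ne_bot _ this

lemma dotp_le_toReal {n m : ℕ} {X : Set (Fin n → ℝ)} (hXne : X.Nonempty)
    (A : Fin m → Fin n → ℝ) (ν : Fin m → ℝ) (htop : sigA X A ν ≠ ⊤)
    {x : Fin n → ℝ} (hx : x ∈ X) :
    dotp (-(Amap A ν)) x ≤ (sigA X A ν).toReal := by
  have h1 := coe_dotp_le_sigA X A ν hx
  have h2 : sigA X A ν = ((sigA X A ν).toReal : EReal) :=
    (EReal.coe_toReal htop (sigA_ne_bot hXne A ν)).symm
  rw [h2] at h1
  exact_mod_cast h1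

lemma toReal_le_of_le {n m : ℕ} {X : Set (Fin n → ℝ)} (hXne : X.Nonempty)
    (A : Fin m → Fin n → ℝ) (ν : Fin m → ℝ) {r : ℝ}
    (h : ∀ x ∈ X, dotp (-(Amap A ν)) x ≤ r) : (sigA X A ν).toReal ≤ r := by
  have h1 : sigA X A ν ≤ (r : EReal) := (sigA_le_coe_iff X A ν r).2 h
  have h2 := sigA_ne_bot hXne A ν
  calc (sigA X A ν).toReal ≤ ((r : EReal)).toReal :=
        EReal.toReal_le_toReal h1 h2 (EReal.coe_ne_top r)
    _ = r := EReal.toReal_coe r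

lemma sigA_ne_top_of_le {n m : ℕ} (X : Set (Fin n → ℝ)) (A : Fin m → Fin n → ℝ)
    (ν : Fin m → ℝ) {r : ℝ} (h : ∀ x ∈ X, dotp (-(Amap A ν)) x ≤ r) : sigA X A ν ≠ ⊤ := by
  have h1 : sigA X A ν ≤ (r : EReal) := (sigA_le_coe_iff X A ν r).2 h
  exact (lt_of_le_of_lt h1 (EReal.coe_lt_top r)).ne

lemma toReal_sigA_smul {n m : ℕ} {X : Set (Fin n → ℝ)} (hXne : X.Nonempty)
    (A : Fin m → Fin n → ℝ) (ν : Fin m → ℝ) {c : ℝ} (hc : 0 < c)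
    (htop : sigA X A ν ≠ ⊤) :
    (sigA X A (c • ν)).toReal = c * (sigA X A ν).toReal := by
  have key : ∀ x ∈ X, dotp (-(Amap A (c • ν))) x = c * dotp (-(Amap A ν)) x := by
    intro x _; rw [dotp_neg_Amap, dotp_neg_Amap, auxg_smul]; ring
  have hub : ∀ x ∈ X, dotp (-(Amap A (c • ν))) x ≤ c * (sigA X A ν).toReal := by
    intro x hx; rw [key x hx]
    exact mul_le_mul_of_nonneg_left (dotp_le_toReal hXne A ν htop hx) hc.le
  have htop' : sigA X A (c • ν) ≠ ⊤ := sigA_ne_top_of_le X A _ hub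
  apply le_antisymm (toReal_le_of_le hXne A _ hub)
  have hub2 : ∀ x ∈ X, dotp (-(Amap A ν)) x ≤ c⁻¹ * (sigA X A (c • ν)).toReal := by
    intro x hx
    have := dotp_le_toReal hXne A (c • ν) htop' hx
    rw [key x hx] at this
    rw [le_inv_mul_iff₀ hc]
    linarith
  have := toReal_le_of_le hXne A ν hub2
  calc c * (sigA X A ν).toReal ≤ c * (c⁻¹ * (sigA X A (c • ν)).toReal) :=
        mul_le_mul_of_nonneg_left this hc.le
    _ = (sigA X A (c • ν)).toReal := by field_simp

-- Nbeta facts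
lemma nbeta_b_nonpos {m : ℕ} {b : Fin m} {ν : Fin m → ℝ} (h : ν ∈ Nbeta b) : ν b ≤ 0 := by
  obtain ⟨h1, h2⟩ := h
  have : ∑ i ∈ Finset.univ.erase b, ν i + ν b = 0 := by
    rw [add_comm, Finset.add_sum_erase _ _ (Finset.mem_univ b)]; exact h2
  have hnn : 0 ≤ ∑ i ∈ Finset.univ.erase b, ν i :=
    Finset.sum_nonneg fun i hi => h1 i (Finset.ne_of_mem_erase hi)
  linarith

lemma nbeta_eq_zero_of_b {m : ℕ} {b : Fin m} {ν : Fin m → ℝ} (h : ν ∈ Nbeta b)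
    (hb : ν b = 0) : ν = 0 := by
  obtain ⟨h1, h2⟩ := h
  have hsum : ∑ i ∈ Finset.univ.erase b, ν i = 0 := by
    have : ∑ i ∈ Finset.univ.erase b, ν i + ν b = 0 := by
      rw [add_comm, Finset.add_sum_erase _ _ (Finset.mem_univ b)]; exact h2
    linarith
  have hz : ∀ i ∈ Finset.univ.erase b, ν i = 0 :=
    (Finset.sum_eq_zero_iff_of_nonneg
      (fun i hi => h1 i (Finset.ne_of_mem_erase hi))).1 hsum
  funext i
  by_cases hib : i = b
  · rw [hib]; exact hb
  · exact hz i (Finset.mem_erase.2 ⟨hib, Finset.mem_univ i⟩)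

lemma nbeta_smul {m : ℕ} {b : Fin m} {ν : Fin m → ℝ} (h : ν ∈ Nbeta b) {c : ℝ} (hc : 0 ≤ c) :
    c • ν ∈ Nbeta b := by
  obtain ⟨h1, h2⟩ := h
  refine ⟨fun i hi => mul_nonneg hc (h1 i hi), ?_⟩
  simp only [Pi.smul_apply, smul_eq_mul, ← Finset.mul_sum, h2, mul_zero]

lemma nbeta_add {m : ℕ} {b : Fin m} {ν ν' : Fin m → ℝ} (h : ν ∈ Nbeta b) (h' : ν' ∈ Nbeta b) :
    ν + ν' ∈ Nbeta b := by
  obtain ⟨h1, h2⟩ := h; obtain ⟨h1', h2'⟩ := h'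
  refine ⟨fun i hi => add_nonneg (h1 i hi) (h1' i hi), ?_⟩
  simp only [Pi.add_apply, Finset.sum_add_distrib, h2, h2', add_zero]

lemma nbeta_zero {m : ℕ} (b : Fin m) : (0 : Fin m → ℝ) ∈ Nbeta b :=
  ⟨fun i _ => le_refl 0, by simp⟩

-- ============ the component cones ============
def auxE {n m : ℕ} (X : Set (Fin n → ℝ)) (A : Fin m → Fin n → ℝ) (b : Fin m) :
    Set ((Fin m → ℝ) × ℝ) :=
  {p | p.1 ∈ Nbeta b ∧ ∀ x ∈ X, dotp (-(Amap A p.1)) x ≤ p.2}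

lemma auxE_zero {n m : ℕ} (X : Set (Fin n → ℝ)) (A : Fin m → Fin n → ℝ) (b : Fin m) :
    (0 : (Fin m → ℝ) × ℝ) ∈ auxE X A b := by
  refine ⟨nbeta_zero b, fun x hx => ?_⟩
  have : (0 : (Fin m → ℝ) × ℝ).1 = (0 : Fin m → ℝ) := rfl
  rw [this, dotp_neg_Amap, auxg_zero]
  simp

lemma auxE_smul {n m : ℕ} {X : Set (Fin n → ℝ)} {A : Fin m → Fin n → ℝ} {b : Fin m}
    {p : (Fin m → ℝ) × ℝ} (hp : p ∈ auxE X A b) {c : ℝ} (hc : 0 ≤ c) :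
    c • p ∈ auxE X A b := by
  obtain ⟨h1, h2⟩ := hp
  refine ⟨nbeta_smul h1 hc, fun x hx => ?_⟩
  have : (c • p).1 = c • p.1 := rfl
  rw [this, dotp_neg_Amap, auxg_smul]
  have h3 := h2 x hx
  rw [dotp_neg_Amap] at h3
  have : (c • p).2 = c * p.2 := rfl
  rw [this]
  nlinarith

lemma auxE_add {n m : ℕ} {X : Set (Fin n → ℝ)} {A : Fin m → Fin n → ℝ} {b : Fin m}
    {p q : (Fin m → ℝ) × ℝ} (hp : p ∈ auxE X A b) (hq : q ∈ auxE X A b) :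
    p + q ∈ auxE X A b := by
  obtain ⟨h1, h2⟩ := hp; obtain ⟨h1', h2'⟩ := hq
  refine ⟨nbeta_add h1 h1', fun x hx => ?_⟩
  have : (p + q).1 = p.1 + q.1 := rfl
  rw [this, dotp_neg_Amap, auxg_add]
  have h3 := h2 x hx; have h3' := h2' x hx
  rw [dotp_neg_Amap] at h3 h3'
  have : (p + q).2 = p.2 + q.2 := rfl
  rw [this]; linarith

lemma auxE_closed {n m : ℕ} (X : Set (Fin n → ℝ)) (A : Fin m → Fin n → ℝ) (b : Fin m) :
    IsClosed (auxE X A b) := by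
  have : auxE X A b =
      (⋂ i, ⋂ (_ : i ≠ b), {p : (Fin m → ℝ) × ℝ | 0 ≤ p.1 i}) ∩
      ({p : (Fin m → ℝ) × ℝ | ∑ i, p.1 i = 0} ∩
       ⋂ x ∈ X, {p : (Fin m → ℝ) × ℝ | dotp (-(Amap A p.1)) x ≤ p.2}) := by
    ext p
    simp only [auxE, Nbeta, Set.mem_inter_iff, Set.mem_iInter, Set.mem_setOf_eq]
    tauto
  rw [this]
  have hcontin : ∀ i : Fin m, Continuous (fun p : (Fin m → ℝ) × ℝ => p.1 i) := by
    intro i; exact (continuous_apply i).comp continuous_fst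
  refine IsClosed.inter ?_ (IsClosed.inter ?_ ?_)
  · exact isClosed_iInter fun i => isClosed_iInter fun _ =>
      isClosed_le continuous_const (hcontin i)
  · exact isClosed_eq (by continuity) continuous_const
  · refine isClosed_biInter fun x hx => ?_
    have : ∀ p : (Fin m → ℝ) × ℝ, dotp (-(Amap A p.1)) x = -auxg A p.1 x := by
      intro p; exact dotp_neg_Amap A p.1 x
    simp only [this]
    apply isClosed_le
    · have : Continuous fun p : (Fin m → ℝ) × ℝ => auxg A p.1 x := by
        unfold auxg
        exact continuous_finset_sum _ fun i _ => ((hcontin i).mul continuous_const)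
      exact this.neg
    · exact continuous_snd

-- ============ coneHull lemmas ============
section ConeHull
variable {E : Type*} [AddCommMonoid E] [Module ℝ E] {S : Set E}

lemma coneHull_zero_mem : (0 : E) ∈ coneHull S :=
  ⟨0, Fin.elim0, Fin.elim0, fun j => j.elim0, fun j => j.elim0, by simp⟩

lemma coneHull_smul_single_mem {x : E} (hx : x ∈ S) {c : ℝ} (hc : 0 ≤ c) :
    c • x ∈ coneHull S :=
  ⟨1, fun _ => c, fun _ => x, fun _ => hc, fun _ => hx, by simp⟩

lemma coneHull_mem {x : E} (hx : x ∈ S) : x ∈ coneHull S := by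
  have := coneHull_smul_single_mem (S := S) hx (zero_le_one) (c := 1)
  simpa using this

lemma coneHull_add_mem {x y : E} (hx : x ∈ coneHull S) (hy : y ∈ coneHull S) :
    x + y ∈ coneHull S := by
  obtain ⟨k1, t1, v1, ht1, hv1, rfl⟩ := hx
  obtain ⟨k2, t2, v2, ht2, hv2, rfl⟩ := hy
  refine ⟨k1 + k2, Fin.append t1 t2, Fin.append v1 v2, ?_, ?_, ?_⟩
  · intro j
    refine Fin.addCases (fun i => ?_) (fun i => ?_) j
    · rw [Fin.append_left]; exact ht1 i
    · rw [Fin.append_right]; exact ht2 i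
  · intro j
    refine Fin.addCases (fun i => ?_) (fun i => ?_) j
    · rw [Fin.append_left]; exact hv1 i
    · rw [Fin.append_right]; exact hv2 i
  · rw [Fin.sum_univ_add]
    congr 1
    · exact Finset.sum_congr rfl fun i _ => by rw [Fin.append_left, Fin.append_left]
    · exact Finset.sum_congr rfl fun i _ => by rw [Fin.append_right, Fin.append_right]

lemma coneHull_smul_mem {x : E} (hx : x ∈ coneHull S) {c : ℝ} (hc : 0 ≤ c) :
    c • x ∈ coneHull S := by
  obtain ⟨k, t, v, ht, hv, rfl⟩ := hx
  refine ⟨k, fun j => c * t j, v, fun j => mul_nonneg hc (ht j), hv, ?_⟩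
  rw [Finset.smul_sum]
  exact Finset.sum_congr rfl fun j _ => by rw [smul_smul]

lemma coneHull_convex : Convex ℝ (coneHull S) := by
  intro x hx y hy a b ha hb _
  exact coneHull_add_mem (coneHull_smul_mem hx ha) (coneHull_smul_mem hy hb)

lemma coneHull_sum_mem {k : ℕ} {f : Fin k → E} (hf : ∀ j, f j ∈ coneHull S) :
    ∑ j, f j ∈ coneHull S := by
  induction k with
  | zero => simpa using coneHull_zero_mem
  | succ k ih =>
    rw [Fin.sum_univ_castSucc]
    exact coneHull_add_mem (ih fun j => hf j.castSucc) (hf (Fin.last k))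

end ConeHull

-- ============ sum cone K, easy inclusion ============
def auxK {n m : ℕ} (X : Set (Fin n → ℝ)) (A : Fin m → Fin n → ℝ) :
    Set ((Fin m → ℝ) × ℝ) :=
  {p | ∃ f : Fin m → (Fin m → ℝ) × ℝ, (∀ b, f b ∈ auxE X A b) ∧ p = ∑ b, f b}

lemma phi_mem_auxE {n m : ℕ} {X : Set (Fin n → ℝ)} (hXne : X.Nonempty)
    {A : Fin m → Fin n → ℝ} {b : Fin m} {l : Fin m → ℝ} (hl : l ∈ LambdaB X A b) :
    phiVec X A l ∈ auxE X A b := by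
  obtain ⟨⟨hN, _, htop, _⟩, _⟩ := hl
  exact ⟨hN, fun x hx => dotp_le_toReal hXne A l htop.ne hx⟩

lemma zeroOne_mem_auxE {n m : ℕ} (X : Set (Fin n → ℝ)) (A : Fin m → Fin n → ℝ) (b : Fin m) :
    ((0 : Fin m → ℝ), (1 : ℝ)) ∈ auxE X A b := by
  refine ⟨nbeta_zero b, fun x hx => ?_⟩
  rw [show (((0 : Fin m → ℝ), (1:ℝ)) : (Fin m → ℝ) × ℝ).1 = (0 : Fin m → ℝ) from rfl,
    dotp_neg_Amap, auxg_zero]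
  norm_num

lemma single_mem_auxK {n m : ℕ} {X : Set (Fin n → ℝ)} {A : Fin m → Fin n → ℝ} {b : Fin m}
    {p : (Fin m → ℝ) × ℝ} (hp : p ∈ auxE X A b) : p ∈ auxK X A := by
  refine ⟨Function.update (0 : Fin m → (Fin m → ℝ) × ℝ) b p, fun c => ?_, ?_⟩
  · by_cases hcb : c = b
    · rw [hcb, Function.update_self]; exact hp
    · rw [Function.update_of_ne hcb]; exact auxE_zero X A c
  · rw [Finset.sum_update_of_mem (Finset.mem_univ b)]
    simp

lemma auxK_add {n m : ℕ} {X : Set (Fin n → ℝ)} {A : Fin m → Fin n → ℝ}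
    {p q : (Fin m → ℝ) × ℝ} (hp : p ∈ auxK X A) (hq : q ∈ auxK X A) :
    p + q ∈ auxK X A := by
  obtain ⟨f, hf, rfl⟩ := hp; obtain ⟨g, hg, rfl⟩ := hq
  exact ⟨f + g, fun b => auxE_add (hf b) (hg b), by simp [Pi.add_apply, Finset.sum_add_distrib]⟩

lemma auxK_smul {n m : ℕ} {X : Set (Fin n → ℝ)} {A : Fin m → Fin n → ℝ}
    {p : (Fin m → ℝ) × ℝ} (hp : p ∈ auxK X A) {c : ℝ} (hc : 0 ≤ c) :
    c • p ∈ auxK X A := by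
  obtain ⟨f, hf, rfl⟩ := hp
  exact ⟨c • f, fun b => auxE_smul (hf b) hc, by rw [Finset.smul_sum]; rfl⟩

lemma graph_subset_auxK {n m : ℕ} {X : Set (Fin n → ℝ)} (hXne : X.Nonempty)
    {A : Fin m → Fin n → ℝ} (hm : 0 < m) :
    circuitGraph X A ⊆ auxK X A := by
  rintro p ⟨k, t, v, ht, hv, rfl⟩
  have hgen : ∀ j, v j ∈ auxK X A := by
    intro j
    rcases hv j with hj | hj
    · obtain ⟨l, hl, hjeq⟩ := hj
      rw [← hjeq]
      obtain ⟨b, hb⟩ := Set.mem_iUnion.1 hl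
      exact single_mem_auxK (phi_mem_auxE hXne hb)
    · rw [Set.mem_singleton_iff.1 hj]
      exact single_mem_auxK (zeroOne_mem_auxE X A ⟨0, hm⟩)
  -- sum of scaled members
  have : ∀ j, t j • v j ∈ auxK X A := fun j => auxK_smul (hgen j) (ht j)
  -- fold
  clear ht hv hgen
  induction k with
  | zero => simp only [Finset.univ_eq_empty, Finset.sum_empty]
            exact ⟨0, fun b => auxE_zero X A b, by simp⟩
  | succ k ih =>
    rw [Fin.sum_univ_castSucc]
    exact auxK_add (ih _ _ fun j => this j.castSucc) (this (Fin.last k))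

-- ============ Minkowski theorem ============
section Minkowski

open Module

local notation "⟪" x ", " y "⟫" => @inner ℝ _ _ x y

theorem aux_support {N : ℕ} (W : Submodule ℝ (EuclideanSpace ℝ (Fin N)))
    {s : Set (EuclideanSpace ℝ (Fin N))} (hcl : IsClosed s) (hc : Convex ℝ s)
    {p : EuclideanSpace ℝ (Fin N)} (hp : p ∈ s)
    (hsW : ∀ y ∈ s, y - p ∈ W) {u : EuclideanSpace ℝ (Fin N)} (hu : u ∈ W)
    (hnot : ∀ t : ℝ, 0 < t → p + t • u ∉ s) :
    ∃ w : EuclideanSpace ℝ (Fin N), w ∈ W ∧ w ≠ 0 ∧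
      ∀ y ∈ s, ⟪w, y⟫ ≤ ⟪w, p⟫ := by
  -- for every k, separate `p + u/(k+1)` from `s` and project the functional onto `W`
  have key : ∀ k : ℕ, ∃ w : EuclideanSpace ℝ (Fin N), w ∈ W ∧ ‖w‖ = 1 ∧
      ∀ y ∈ s, ⟪w, y - p⟫ ≤ (1 / (k + 1 : ℝ)) * ‖u‖ := by
    intro k
    set t : ℝ := 1 / (k + 1 : ℝ) with ht
    have htpos : 0 < t := by positivity
    obtain ⟨f, c, hfs, hfc⟩ :=
      geometric_hahn_banach_closed_point hc hcl (hnot t htpos)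
    set v := (InnerProductSpace.toDual ℝ (EuclideanSpace ℝ (Fin N))).symm f with hv
    have hvf : ∀ y, ⟪v, y⟫ = f y := fun y => InnerProductSpace.toDual_symm_apply
    set w0 : EuclideanSpace ℝ (Fin N) := (W.orthogonalProjectionOnto v : EuclideanSpace ℝ (Fin N))
      with hw0
    have hproj : ∀ z ∈ W, ⟪w0, z⟫ = ⟪v, z⟫ := by
      intro z hz
      have h1 : v - w0 ∈ Wᗮ := W.sub_starProjection_mem_orthogonal v
      have h2 : ⟪z, v - w0⟫ = 0 := (Submodule.mem_orthogonal W (v - w0)).1 h1 z hz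
      have h3 : ⟪v - w0, z⟫ = 0 := by rw [real_inner_comm]; exact h2
      rw [inner_sub_left] at h3
      linarith
    have hstrict : ∀ y ∈ s, ⟪w0, y - p⟫ < t * ⟪w0, u⟫ := by
      intro y hy
      have h1 : ⟪v, y - p⟫ = f y - f p := by rw [inner_sub_right, hvf, hvf]
      have h2 : f y < c := hfs y hy
      have h3 : c < f (p + t • u) := hfc
      have h4 : f (p + t • u) = f p + t * f u := by
        rw [map_add, map_smul]; rfl
      have h5 : ⟪w0, y - p⟫ = ⟪v, y - p⟫ := hproj _ (hsW y hy)
      have h6 : ⟪w0, u⟫ = ⟪v, u⟫ := hproj _ hu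
      rw [h5, h6, h1, hvf]
      linarith
    have hw0pos : 0 < t * ⟪w0, u⟫ := by
      have := hstrict p hp
      simpa using this
    have hw0ne : w0 ≠ 0 := by
      intro h
      rw [h] at hw0pos
      simp at hw0pos
    have hnorm : 0 < ‖w0‖ := norm_pos_iff.2 hw0ne
    refine ⟨‖w0‖⁻¹ • w0, Submodule.smul_mem W _ (W.orthogonalProjectionOnto v).2, ?_, ?_⟩
    · rw [norm_smul]; simp [abs_of_pos (inv_pos.2 hnorm)]
      field_simp
    · intro y hy
      rw [real_inner_smul_left]
      have h1 : ⟪w0, y - p⟫ < t * ⟪w0, u⟫ := hstrict y hy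
      have h2 : ⟪w0, u⟫ ≤ ‖w0‖ * ‖u‖ := real_inner_le_norm w0 u
      have h3 : ‖w0‖⁻¹ * ⟪w0, y - p⟫ ≤ ‖w0‖⁻¹ * (t * (‖w0‖ * ‖u‖)) := by
        apply mul_le_mul_of_nonneg_left _ (inv_pos.2 hnorm).le
        nlinarith
      calc ‖w0‖⁻¹ * ⟪w0, y - p⟫ ≤ ‖w0‖⁻¹ * (t * (‖w0‖ * ‖u‖)) := h3
        _ = t * ‖u‖ := by field_simp
  choose wk hwkW hwknorm hwkb using key
  have hcompact : IsCompact (Metric.sphere (0 : EuclideanSpace ℝ (Fin N)) 1 ∩ (W : Set _)) :=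
    (isCompact_sphere _ _).inter_right (Submodule.closed_of_finiteDimensional W)
  have hmem : ∀ k, wk k ∈ Metric.sphere (0 : EuclideanSpace ℝ (Fin N)) 1 ∩ (W : Set _) :=
    fun k => ⟨by simp [hwknorm k], hwkW k⟩
  obtain ⟨w, hwmem, φ, hφ, hφt⟩ := hcompact.tendsto_subseq hmem
  refine ⟨w, hwmem.2, ?_, ?_⟩
  · intro h
    have := hwmem.1
    rw [h] at this
    simp at this
  · intro y hy
    have hle : ∀ k, ⟪wk (φ k), y - p⟫ ≤ (1 / (φ k + 1 : ℝ)) * ‖u‖ :=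
      fun k => hwkb (φ k) y hy
    have h1 : Filter.Tendsto (fun k => ⟪wk (φ k), y - p⟫) Filter.atTop (nhds ⟪w, y - p⟫) := by
      exact (hφt.inner tendsto_const_nhds)
    have h2 : Filter.Tendsto (fun k => (1 / (φ k + 1 : ℝ)) * ‖u‖) Filter.atTop (nhds 0) := by
      have := (tendsto_one_div_add_atTop_nhds_zero_nat (𝕜 := ℝ)).comp hφ.tendsto_atTop
      simpa using this.mul_const ‖u‖
    have h3 : ⟪w, y - p⟫ ≤ 0 := le_of_tendsto_of_tendsto' h1 h2 hle
    rw [inner_sub_right] at h3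
    linarith

end Minkowski

section Minkowski2
set_option maxHeartbeats 1000000

open Module

local notation "⟪" x ", " y "⟫" => @inner ℝ _ _ x y

theorem aux_minkowski_euc {N : ℕ} (d : ℕ) :
    ∀ (W : Submodule ℝ (EuclideanSpace ℝ (Fin N))), finrank ℝ W ≤ d →
    ∀ s : Set (EuclideanSpace ℝ (Fin N)), IsCompact s → Convex ℝ s →
    (∀ y ∈ s, ∀ z ∈ s, y - z ∈ W) → s ⊆ convexHull ℝ (s.extremePoints ℝ) := by
  induction d with
  | zero =>
    intro W hW s hcomp hconv hdir x hx
    have hWbot : W = ⊥ := Submodule.finrank_eq_zero.1 (Nat.le_zero.1 hW)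
    have hsx : ∀ y ∈ s, y = x := by
      intro y hy
      have := hdir y hy x hx
      rw [hWbot, Submodule.mem_bot, sub_eq_zero] at this
      exact this
    apply subset_convexHull
    refine ⟨hx, fun x₁ hx₁ x₂ hx₂ _ => hsx x₁ hx₁⟩
  | succ d ih =>
    intro W hW s hcomp hconv hdir x hx
    by_cases hxext : x ∈ s.extremePoints ℝ
    · exact subset_convexHull ℝ _ hxext
    rw [mem_extremePoints] at hxext
    push_neg at hxext
    obtain ⟨y₁, hy₁, y₂, hy₂, hseg, hne⟩ := hxext hx
    obtain ⟨a, b, ha, hb, hab, hxeq⟩ := hseg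
    set u := y₂ - y₁ with hu
    have hune : u ≠ 0 := by
      intro h
      rw [hu, sub_eq_zero] at h
      have : x = y₁ := by
        rw [← hxeq, ← h]
        rw [← add_smul, hab, one_smul]
      exact hne (this ▸ rfl) (by rw [this, h])
    have huW : u ∈ W := hdir y₂ hy₂ y₁ hy₁
    -- the set of parameters along the chord
    set T := {t : ℝ | x + t • u ∈ s} with hT
    have hTclosed : IsClosed T := by
      have : T = (fun t : ℝ => x + t • u) ⁻¹' s := rfl
      rw [this]
      exact hcomp.isClosed.preimage (continuous_const.add (continuous_id.smul continuous_const))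
    have hTbdd : Bornology.IsBounded T := by
      obtain ⟨C, hC0⟩ := hcomp.isBounded.subset_closedBall (0 : EuclideanSpace ℝ (Fin N))
      have hC : ∀ y ∈ s, ‖y‖ ≤ C := fun y hy => mem_closedBall_zero_iff.1 (hC0 hy)
      have hunorm : 0 < ‖u‖ := norm_pos_iff.2 hune
      apply (Metric.isBounded_Icc (-((C + ‖x‖)/‖u‖)) ((C + ‖x‖)/‖u‖)).subset
      intro t htm
      have h1 : ‖x + t • u‖ ≤ C := hC _ htm
      have h2 : |t| * ‖u‖ = ‖t • u‖ := by rw [norm_smul]; simp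
      have h3 : ‖t • u‖ ≤ ‖x + t • u‖ + ‖x‖ := by
        calc ‖t • u‖ = ‖(x + t • u) - x‖ := by congr 1; abel
          _ ≤ ‖x + t • u‖ + ‖x‖ := norm_sub_le _ _
      have h4 : |t| ≤ (C + ‖x‖)/‖u‖ := by
        rw [le_div_iff₀ hunorm]
        nlinarith
      exact Set.mem_Icc.2 (abs_le.1 h4)
    have hTcomp : IsCompact T := Metric.isCompact_of_isClosed_isBounded hTclosed hTbdd
    have hbT : -b ∈ T := by
      simp only [hT, Set.mem_setOf_eq]
      have : x + (-b) • u = y₁ := by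
        rw [← hxeq, hu, show (a:ℝ) = 1 - b by linarith]; module
      rw [this]; exact hy₁
    have haT : a ∈ T := by
      simp only [hT, Set.mem_setOf_eq]
      have : x + a • u = y₂ := by
        rw [← hxeq, hu, show (a:ℝ) = 1 - b by linarith]
        module
      rw [this]; exact hy₂
    have hTne : T.Nonempty := ⟨a, haT⟩
    set tmax := sSup T with htmax
    set tmin := sInf T with htmin
    have htmaxT : tmax ∈ T := hTcomp.sSup_mem hTne
    have htminT : tmin ∈ T := hTcomp.sInf_mem hTne
    have htmax_ge : a ≤ tmax := le_csSup hTbdd.bddAbove haT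
    have htmin_le : tmin ≤ -b := csInf_le hTbdd.bddBelow hbT
    have htmaxpos : 0 < tmax := lt_of_lt_of_le ha htmax_ge
    have htminneg : tmin < 0 := lt_of_le_of_lt htmin_le (neg_lt_zero.2 hb)
    set p' := x + tmax • u with hp'
    set q' := x + tmin • u with hq'
    have hp's : p' ∈ s := htmaxT
    have hq's : q' ∈ s := htminT
    -- main claim: both endpoints are in the convex hull of extreme points
    have claim : ∀ (t0 : ℝ) (u' : EuclideanSpace ℝ (Fin N)), u' ∈ W → u' ≠ 0 →
        (∀ r : ℝ, 0 < r → x + (t0 • u' + r • u') ∉ s) → x + t0 • u' ∈ s →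
        x + t0 • u' ∈ convexHull ℝ (s.extremePoints ℝ) := by
      intro t0 u' hu'W hu'ne hnomore hmem
      set pp := x + t0 • u' with hpp
      have hnot : ∀ r : ℝ, 0 < r → pp + r • u' ∉ s := by
        intro r hr
        have : pp + r • u' = x + (t0 • u' + r • u') := by rw [hpp]; abel
        rw [this]
        exact hnomore r hr
      obtain ⟨w, hwW, hwne, hwsup⟩ := aux_support W hcomp.isClosed hconv hmem
        (fun y hy => hdir y hy pp hmem) hu'W hnot
      set F := {y ∈ s | ⟪w, y⟫ = ⟪w, pp⟫} with hF
      have hppF : pp ∈ F := ⟨hmem, rfl⟩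
      have hFs : F ⊆ s := fun y hy => hy.1
      have hFcomp : IsCompact F := by
        apply hcomp.of_isClosed_subset _ hFs
        exact hcomp.isClosed.inter (isClosed_eq (continuous_const.inner continuous_id) continuous_const)
      have hFconv : Convex ℝ F := by
        intro z₁ hz₁ z₂ hz₂ c₁ c₂ hc₁ hc₂ hc
        refine ⟨hconv hz₁.1 hz₂.1 hc₁ hc₂ hc, ?_⟩
        rw [inner_add_right, real_inner_smul_right, real_inner_smul_right, hz₁.2, hz₂.2]
        have : c₁ * ⟪w, pp⟫ + c₂ * ⟪w, pp⟫ = (c₁ + c₂) * ⟪w, pp⟫ := by ring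
        rw [this, hc, one_mul]
      -- the face is extreme
      have hFext : IsExtreme ℝ s F := by
        refine ⟨hFs, fun x₁ hx₁ x₂ hx₂ z hz hzseg => ?_⟩
        obtain ⟨c₁, c₂, hc₁, hc₂, hc, hzeq⟩ := hzseg
        have h1 : ⟪w, x₁⟫ ≤ ⟪w, pp⟫ := hwsup x₁ hx₁
        have h2 : ⟪w, x₂⟫ ≤ ⟪w, pp⟫ := hwsup x₂ hx₂
        have h3 : c₁ * ⟪w, x₁⟫ + c₂ * ⟪w, x₂⟫ = ⟪w, pp⟫ := by
          rw [← hz.2, ← hzeq, inner_add_right, real_inner_smul_right, real_inner_smul_right]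
        have hipp : c₁ * ⟪w, pp⟫ + c₂ * ⟪w, pp⟫ = ⟪w, pp⟫ := by
          rw [← add_mul, hc, one_mul]
        have k1 : c₁ * ⟪w, x₁⟫ = c₁ * ⟪w, pp⟫ := by
          linarith [mul_le_mul_of_nonneg_left h1 hc₁.le, mul_le_mul_of_nonneg_left h2 hc₂.le]
        have k2 : c₂ * ⟪w, x₂⟫ = c₂ * ⟪w, pp⟫ := by
          linarith [mul_le_mul_of_nonneg_left h1 hc₁.le, mul_le_mul_of_nonneg_left h2 hc₂.le]
        exact ⟨hx₁, mul_left_cancel₀ hc₁.ne' k1⟩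
      -- smaller submodule
      set W' := W ⊓ (ℝ ∙ w)ᗮ with hW'
      have hwnotW' : w ∉ W' := by
        intro h
        have h2 := (Submodule.mem_inf.1 h).2
        rw [Submodule.mem_orthogonal_singleton_iff_inner_right] at h2
        rw [real_inner_self_eq_norm_sq] at h2
        have h3 := norm_pos_iff.2 hwne
        nlinarith
      have hW'lt : W' < W := lt_of_le_of_ne inf_le_left (fun h => hwnotW' (h ▸ hwW))
      have hW'd : finrank ℝ W' ≤ d := by
        have h1 : finrank ℝ W' < finrank ℝ W := Submodule.finrank_lt_finrank_of_lt hW'lt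
        omega
      have hFdir : ∀ y ∈ F, ∀ z ∈ F, y - z ∈ W' := by
        intro y hy z hz
        refine Submodule.mem_inf.2 ⟨hdir y (hFs hy) z (hFs hz), ?_⟩
        rw [Submodule.mem_orthogonal_singleton_iff_inner_right, inner_sub_right, hy.2, hz.2]
        ring
      have := ih W' hW'd F hFcomp hFconv hFdir hppF
      -- extreme points of F are extreme points of s
      refine convexHull_mono ?_ this
      exact hFext.extremePoints_subset_extremePoints
    -- apply claim to both endpoints
    have hp'hull : p' ∈ convexHull ℝ (s.extremePoints ℝ) := by
      refine claim tmax u huW hune ?_ hp's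
      intro r hr hmem
      have : tmax + r ∈ T := by
        simp only [hT, Set.mem_setOf_eq]
        have : x + (tmax + r) • u = x + (tmax • u + r • u) := by module
        rw [this]; exact hmem
      have := le_csSup hTbdd.bddAbove this
      linarith
    have hq'hull : q' ∈ convexHull ℝ (s.extremePoints ℝ) := by
      have : q' = x + (-tmin) • (-u) := by rw [hq']; module
      rw [this]
      refine claim (-tmin) (-u) (neg_mem huW) (neg_ne_zero.2 hune) ?_ (by rw [← this]; exact hq's)
      intro r hr hmem
      have : tmin - r ∈ T := by
        simp only [hT, Set.mem_setOf_eq]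
        have : x + (tmin - r) • u = x + ((-tmin) • (-u) + r • (-u)) := by module
        rw [this]; exact hmem
      have := csInf_le hTbdd.bddBelow this
      linarith
    -- x is in the open segment between p' and q'
    have hd : tmax - tmin ≠ 0 := by intro h; linarith
    set c1 := (-tmin)/(tmax - tmin) with hc1
    set c2 := tmax/(tmax - tmin) with hc2
    have hc1pos : 0 < c1 := div_pos (by linarith) (by linarith)
    have hc2pos : 0 < c2 := div_pos (by linarith) (by linarith)
    have hcsum : c1 + c2 = 1 := by
      rw [hc1, hc2, ← add_div, div_eq_one_iff_eq hd]; ring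
    have hczero : c1 * tmax + c2 * tmin = 0 := by
      rw [hc1, hc2, div_mul_eq_mul_div, div_mul_eq_mul_div, ← add_div,
        show -tmin * tmax + tmax * tmin = 0 by ring, zero_div]
    have hxseg : x ∈ openSegment ℝ p' q' := by
      refine ⟨c1, c2, hc1pos, hc2pos, hcsum, ?_⟩
      rw [hp', hq']
      have heq : c1 • (x + tmax • u) + c2 • (x + tmin • u)
          = (c1 + c2) • x + (c1 * tmax + c2 * tmin) • u := by module
      rw [heq, hcsum, hczero]
      simp
    exact (convex_convexHull ℝ _).openSegment_subset hp'hull hq'hull hxseg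

theorem aux_minkowski {F : Type*} [NormedAddCommGroup F] [NormedSpace ℝ F]
    [FiniteDimensional ℝ F] {s : Set F} (hs : IsCompact s) (hc : Convex ℝ s) :
    s ⊆ convexHull ℝ (s.extremePoints ℝ) := by
  intro x hx
  set e := toEuclidean (E := F) with he
  set N := finrank ℝ F
  have h1 : (⇑e '' s) ⊆ convexHull ℝ ((⇑e '' s).extremePoints ℝ) := by
    refine aux_minkowski_euc (finrank ℝ (⊤ : Submodule ℝ (EuclideanSpace ℝ (Fin N)))) ⊤
      le_rfl _ (hs.image e.continuous) ?_ (fun _ _ _ _ => Submodule.mem_top)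
    exact hc.linear_image (e.toLinearEquiv : F →ₗ[ℝ] EuclideanSpace ℝ (Fin N))
  have hco : (⇑e : F → EuclideanSpace ℝ (Fin N)) = ⇑(e.toLinearEquiv) := rfl
  have h2 : (⇑e '' s).extremePoints ℝ = ⇑e '' (s.extremePoints ℝ) := by
    rw [hco, image_extremePoints e.toLinearEquiv s]
  have h3 : e x ∈ convexHull ℝ (⇑e '' (s.extremePoints ℝ)) := by
    rw [← h2]
    exact h1 (Set.mem_image_of_mem _ hx)
  have hco2 : (⇑e '' (s.extremePoints ℝ)) =
      ⇑(e.toLinearEquiv : F →ₗ[ℝ] EuclideanSpace ℝ (Fin N)) '' (s.extremePoints ℝ) := rfl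
  rw [hco2, ← (e.toLinearEquiv : F →ₗ[ℝ] EuclideanSpace ℝ (Fin N)).image_convexHull] at h3
  obtain ⟨y, hy, hyx⟩ := h3
  have hyx' : e y = e x := hyx
  have : y = x := e.injective hyx'
  rw [← this]; exact hy

end Minkowski2

-- ============ decomposition: auxE ⊆ circuitGraph ============
section Decomp
set_option maxHeartbeats 1000000

noncomputable def auxl {n m : ℕ} (A : Fin m → Fin n → ℝ) (x₀ : Fin n → ℝ) (b : Fin m)
    (p : (Fin m → ℝ) × ℝ) : ℝ := p.2 + auxg A p.1 x₀ - p.1 b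

variable {n m : ℕ} {X : Set (Fin n → ℝ)} {A : Fin m → Fin n → ℝ} {b : Fin m}
  {x₀ : Fin n → ℝ}

lemma auxl_add (p q : (Fin m → ℝ) × ℝ) :
    auxl A x₀ b (p + q) = auxl A x₀ b p + auxl A x₀ b q := by
  simp only [auxl, Prod.fst_add, Prod.snd_add, auxg_add, Pi.add_apply]
  ring

lemma auxl_smul (c : ℝ) (p : (Fin m → ℝ) × ℝ) :
    auxl A x₀ b (c • p) = c * auxl A x₀ b p := by
  simp only [auxl, Prod.smul_fst, Prod.smul_snd, smul_eq_mul, auxg_smul, Pi.smul_apply]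
  ring

lemma auxl_nonneg (hx₀ : x₀ ∈ X) {p : (Fin m → ℝ) × ℝ} (hp : p ∈ auxE X A b) :
    0 ≤ auxl A x₀ b p := by
  have h1 := hp.2 x₀ hx₀
  rw [dotp_neg_Amap] at h1
  have h2 := nbeta_b_nonpos hp.1
  simp only [auxl]
  linarith

lemma auxl_pos_part (hx₀ : x₀ ∈ X) {p : (Fin m → ℝ) × ℝ} (hp : p ∈ auxE X A b) :
    0 ≤ p.2 + auxg A p.1 x₀ ∧ p.1 b ≤ 0 := by
  have h1 := hp.2 x₀ hx₀
  rw [dotp_neg_Amap] at h1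
  exact ⟨by linarith, nbeta_b_nonpos hp.1⟩

lemma auxl_eq_zero_imp (hx₀ : x₀ ∈ X) {p : (Fin m → ℝ) × ℝ} (hp : p ∈ auxE X A b)
    (h : auxl A x₀ b p = 0) : p = 0 := by
  obtain ⟨h1, h2⟩ := auxl_pos_part hx₀ hp
  simp only [auxl] at h
  have hb : p.1 b = 0 := by linarith
  have hp1 : p.1 = 0 := nbeta_eq_zero_of_b hp.1 hb
  have hp2 : p.2 = 0 := by
    have h3 : auxg A p.1 x₀ = 0 := by rw [hp1, auxg_zero]
    rw [hb, h3] at h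
    linarith
  exact Prod.ext hp1 hp2

lemma auxE_convex : Convex ℝ (auxE X A b) := by
  intro p hp q hq a a' ha ha' _
  exact auxE_add (auxE_smul hp ha) (auxE_smul hq ha')

-- the compact convex base
def auxB (X : Set (Fin n → ℝ)) (A : Fin m → Fin n → ℝ) (x₀ : Fin n → ℝ) (b : Fin m) :
    Set ((Fin m → ℝ) × ℝ) :=
  auxE X A b ∩ {p | auxl A x₀ b p = 1}

lemma auxl_continuous : Continuous (auxl A x₀ b) := by
  apply Continuous.sub
  · apply Continuous.add continuous_snd
    exact continuous_finset_sum _ fun i _ =>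
      (((continuous_apply i).comp continuous_fst).mul continuous_const)
  · exact (continuous_apply b).comp continuous_fst

lemma auxB_convex : Convex ℝ (auxB X A x₀ b) := by
  apply auxE_convex.inter
  intro p hp q hq a a' ha ha' haa
  simp only [Set.mem_setOf_eq] at hp hq ⊢
  rw [auxl_add, auxl_smul, auxl_smul, hp, hq]
  simpa using haa

lemma offdiag_sum_le (hx₀ : x₀ ∈ X) {p : (Fin m → ℝ) × ℝ} (hp : p ∈ auxB X A x₀ b) :
    ∀ i, |p.1 i| ≤ 1 := by
  obtain ⟨hpE, hpl⟩ := hp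
  simp only [Set.mem_setOf_eq] at hpl
  obtain ⟨h1, h2⟩ := auxl_pos_part hx₀ hpE
  have hble : -p.1 b ≤ 1 := by simp only [auxl] at hpl; linarith
  have hsum : ∑ i ∈ Finset.univ.erase b, p.1 i = -p.1 b := by
    have h := hpE.1.2
    rw [← Finset.add_sum_erase Finset.univ p.1 (Finset.mem_univ b)] at h
    linarith
  intro i
  by_cases hib : i = b
  · rw [hib, abs_le]; constructor <;> linarith
  · have hi0 : 0 ≤ p.1 i := hpE.1.1 i hib
    have hile : p.1 i ≤ ∑ j ∈ Finset.univ.erase b, p.1 j :=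
      Finset.single_le_sum (fun j hj => hpE.1.1 j (Finset.ne_of_mem_erase hj))
        (Finset.mem_erase.2 ⟨hib, Finset.mem_univ i⟩)
    rw [abs_le]; constructor <;> linarith

lemma auxB_compact (hx₀ : x₀ ∈ X) : IsCompact (auxB X A x₀ b) := by
  apply Metric.isCompact_of_isClosed_isBounded
  · exact (auxE_closed X A b).inter (isClosed_eq auxl_continuous continuous_const)
  · set M := ∑ i, |dotp (A i) x₀| with hM
    have hM0 : 0 ≤ M := Finset.sum_nonneg fun i _ => abs_nonneg _
    rw [Metric.isBounded_iff_subset_closedBall 0]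
    refine ⟨M + 2, fun p hp => ?_⟩
    have hpe := offdiag_sum_le hx₀ hp
    have hauxg : |auxg A p.1 x₀| ≤ M := by
      calc |auxg A p.1 x₀| ≤ ∑ i, |p.1 i * dotp (A i) x₀| := Finset.abs_sum_le_sum_abs _ _
        _ ≤ ∑ i, |dotp (A i) x₀| := by
            apply Finset.sum_le_sum
            intro i _
            rw [abs_mul]
            calc |p.1 i| * |dotp (A i) x₀| ≤ 1 * |dotp (A i) x₀| :=
                  mul_le_mul_of_nonneg_right (hpe i) (abs_nonneg _)
              _ = |dotp (A i) x₀| := one_mul _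
    obtain ⟨hpE, hpl⟩ := hp
    simp only [Set.mem_setOf_eq, auxl] at hpl
    have hp2 : |p.2| ≤ M + 2 := by
      have := hpe b
      rw [abs_le] at this ⊢
      rw [abs_le] at hauxg
      constructor <;> [linarith; linarith]
    rw [Metric.mem_closedBall, dist_zero_right]
    have : ‖p‖ = max ‖p.1‖ ‖p.2‖ := rfl
    rw [this]
    apply max_le
    · have : ‖p.1‖ ≤ 1 := by
        apply pi_norm_le_iff_of_nonneg zero_le_one |>.2
        intro i
        rw [Real.norm_eq_abs]
        exact hpe i
      linarith
    · rw [Real.norm_eq_abs]; exact hp2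

-- helper EReal lemma
lemma aux_coe_mul_ne_bot {c : ℝ} (hc : 0 < c) {x : EReal} (hx : x ≠ ⊥) :
    (c : EReal) * x ≠ ⊥ := by
  induction x with
  | bot => exact absurd rfl hx
  | coe r => rw [← EReal.coe_mul]; exact EReal.coe_ne_bot _
  | top => rw [EReal.mul_top_of_pos (EReal.coe_pos.2 hc)]; simp

lemma aux_ray_extreme (hx₀ : x₀ ∈ X) {z : (Fin m → ℝ) × ℝ}
    (hz : z ∈ (auxB X A x₀ b).extremePoints ℝ) :
    ∀ u ∈ auxE X A b, ∀ w ∈ auxE X A b, u + w = z →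
      u = auxl A x₀ b u • z ∧ w = auxl A x₀ b w • z := by
  intro u hu w hw huw
  obtain ⟨hzB, hzext⟩ := hz
  obtain ⟨hzE, hzl⟩ := hzB
  simp only [Set.mem_setOf_eq] at hzl
  have hlsum : auxl A x₀ b u + auxl A x₀ b w = 1 := by
    rw [← auxl_add, huw, hzl]
  have hlu := auxl_nonneg hx₀ hu
  have hlw := auxl_nonneg hx₀ hw
  rcases eq_or_lt_of_le hlu with hu0 | hupos
  · refine ⟨?_, ?_⟩
    · rw [← hu0, zero_smul]
      exact auxl_eq_zero_imp hx₀ hu hu0.symm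
    · have h1 : auxl A x₀ b w = 1 := by linarith
      rw [h1, one_smul, ← huw, auxl_eq_zero_imp hx₀ hu hu0.symm, zero_add]
  rcases eq_or_lt_of_le hlw with hw0 | hwpos
  · refine ⟨?_, ?_⟩
    · have h1 : auxl A x₀ b u = 1 := by linarith
      rw [h1, one_smul, ← huw, auxl_eq_zero_imp hx₀ hw hw0.symm, add_zero]
    · rw [← hw0, zero_smul]
      exact auxl_eq_zero_imp hx₀ hw hw0.symm
  -- both positive
  set lu := auxl A x₀ b u with hlu_def
  set lw := auxl A x₀ b w with hlw_def
  have hu' : lu⁻¹ • u ∈ auxB X A x₀ b := by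
    refine ⟨auxE_smul hu (inv_nonneg.2 hlu), ?_⟩
    simp only [Set.mem_setOf_eq]
    rw [auxl_smul, ← hlu_def, inv_mul_cancel₀ hupos.ne']
  have hw' : lw⁻¹ • w ∈ auxB X A x₀ b := by
    refine ⟨auxE_smul hw (inv_nonneg.2 hlw), ?_⟩
    simp only [Set.mem_setOf_eq]
    rw [auxl_smul, ← hlw_def, inv_mul_cancel₀ hwpos.ne']
  have hseg : z ∈ openSegment ℝ (lu⁻¹ • u) (lw⁻¹ • w) := by
    refine ⟨lu, lw, hupos, hwpos, hlsum, ?_⟩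
    rw [smul_smul, smul_smul, mul_inv_cancel₀ hupos.ne', mul_inv_cancel₀ hwpos.ne',
      one_smul, one_smul, huw]
  have he1 := hzext hu' hw' hseg
  have he2 := hzext hw' hu' (by rw [openSegment_symm]; exact hseg)
  constructor
  · rw [← he1, smul_smul, mul_inv_cancel₀ hupos.ne', one_smul]
  · rw [← he2, smul_smul, mul_inv_cancel₀ hwpos.ne', one_smul]

end Decomp

-- ============ extreme points of the base are circuit generators ============
section Extreme
set_option maxHeartbeats 1000000

variable {n m : ℕ} {X : Set (Fin n → ℝ)} {A : Fin m → Fin n → ℝ} {b : Fin m}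
  {x₀ : Fin n → ℝ}

lemma extreme_mem_graph (hXne : X.Nonempty) (hx₀ : x₀ ∈ X)
    {z : (Fin m → ℝ) × ℝ} (hz : z ∈ (auxB X A x₀ b).extremePoints ℝ) :
    z ∈ circuitGraph X A := by
  have hray := aux_ray_extreme hx₀ hz
  obtain ⟨⟨hzE, hzl⟩, _⟩ := hz
  simp only [Set.mem_setOf_eq] at hzl
  by_cases hz1 : z.1 = 0
  · -- z = (0,1)
    have hz2 : z.2 = 1 := by
      have : auxl A x₀ b z = z.2 + auxg A z.1 x₀ - z.1 b := rfl
      rw [hz1, auxg_zero] at this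
      simp only [Pi.zero_apply] at this
      rw [hzl] at this
      linarith
    have hzeq : z = ((0 : Fin m → ℝ), (1 : ℝ)) := Prod.ext hz1 hz2
    rw [hzeq]
    exact coneHull_mem (Set.mem_union_right _ rfl)
  · -- z is a multiple of a circuit functional form
    set c := -z.1 b with hc_def
    have hzb_neg : z.1 b < 0 := by
      rcases lt_or_eq_of_le (nbeta_b_nonpos hzE.1) with h | h
      · exact h
      · exact absurd (nbeta_eq_zero_of_b hzE.1 h) hz1
    have hc : 0 < c := by simp only [hc_def]; linarith
    have htop : sigA X A z.1 ≠ ⊤ := sigA_ne_top_of_le X A z.1 hzE.2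
    set τ := (sigA X A z.1).toReal with hτ_def
    have hτ_le : τ ≤ z.2 := toReal_le_of_le hXne A z.1 hzE.2
    -- z.2 = τ
    have hz2τ : z.2 = τ := by
      set u : (Fin m → ℝ) × ℝ := (z.1, τ) with hu_def
      set w : (Fin m → ℝ) × ℝ := ((0 : Fin m → ℝ), z.2 - τ) with hw_def
      have hu : u ∈ auxE X A b :=
        ⟨hzE.1, fun x hx => dotp_le_toReal hXne A z.1 htop hx⟩
      have hw : w ∈ auxE X A b := by
        refine ⟨nbeta_zero b, fun x hx => ?_⟩
        have : w.1 = (0 : Fin m → ℝ) := rfl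
        rw [this, dotp_neg_Amap, auxg_zero]
        have : w.2 = z.2 - τ := rfl
        rw [this]
        linarith
      have huw : u + w = z := by
        apply Prod.ext
        · show z.1 + 0 = z.1; simp
        · show τ + (z.2 - τ) = z.2; ring
      obtain ⟨_, hw_eq⟩ := hray u hu w hw huw
      have hw1 : w.1 = auxl A x₀ b w • z.1 := congrArg Prod.fst hw_eq
      have : auxl A x₀ b w = 0 := by
        by_contra habs
        have : z.1 = (auxl A x₀ b w)⁻¹ • w.1 := by
          rw [hw1, smul_smul, inv_mul_cancel₀ habs, one_smul]
        rw [show w.1 = (0 : Fin m → ℝ) from rfl] at this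
        rw [smul_zero] at this
        exact hz1 this
      have hw20 : w.2 = 0 := by
        have := congrArg Prod.snd hw_eq
        rw [this, show (auxl A x₀ b w • z).2 = auxl A x₀ b w * z.2 from rfl]
        rw [‹auxl A x₀ b w = 0›, zero_mul]
      have : z.2 - τ = 0 := hw20
      linarith
    -- the normalized circuit
    set l := c⁻¹ • z.1 with hl_def
    have hlb : l b = -1 := by
      show c⁻¹ * z.1 b = -1
      rw [show z.1 b = -c by simp [hc_def]]
      field_simp
    have hz1cl : z.1 = c • l := by
      rw [hl_def, smul_smul, mul_inv_cancel₀ hc.ne', one_smul]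
    have hltop : sigA X A l ≠ ⊤ := by
      apply sigA_ne_top_of_le X A l (r := c⁻¹ * z.2)
      intro x hx
      have h1 := hzE.2 x hx
      rw [dotp_neg_Amap] at h1 ⊢
      rw [hl_def, auxg_smul]
      have : -auxg A z.1 x ≤ z.2 := h1
      have hcinv : 0 ≤ c⁻¹ := (inv_pos.2 hc).le
      nlinarith
    have hτcl : τ = c * (sigA X A l).toReal := by
      rw [hτ_def, hz1cl, toReal_sigA_smul hXne A l hc hltop]
    -- l is an X-circuit
    have hcirc : IsXCircuit X A b l := by
      refine ⟨nbeta_smul hzE.1 (inv_pos.2 hc).le, ?_, lt_top_iff_ne_top.2 hltop, ?_⟩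
      · intro h
        have := congrFun h b
        rw [hlb] at this
        norm_num at this
      · rintro ⟨ν1, ν2, θ, hν1, hν2, hnp, hθ, hleq, haff⟩
        have haffθ := haff θ ⟨hθ.1.le, hθ.2.le⟩
        rw [← hleq] at haffθ
        have hσ1bot : sigA X A ν1 ≠ ⊥ := sigA_ne_bot hXne A ν1
        have hσ2bot : sigA X A ν2 ≠ ⊥ := sigA_ne_bot hXne A ν2
        have hθ1 : (0:ℝ) < 1 - θ := by linarith [hθ.2]
        have hσ1top : sigA X A ν1 ≠ ⊤ := by
          intro habs
          rw [habs, EReal.mul_top_of_pos (EReal.coe_pos.2 hθ.1),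
            EReal.top_add_of_ne_bot (aux_coe_mul_ne_bot hθ1 hσ2bot)] at haffθ
          exact hltop haffθ
        have hσ2top : sigA X A ν2 ≠ ⊤ := by
          intro habs
          rw [habs, EReal.mul_top_of_pos (EReal.coe_pos.2 hθ1),
            EReal.add_top_of_ne_bot (aux_coe_mul_ne_bot hθ.1 hσ1bot)] at haffθ
          exact hltop haffθ
        set τ1 := (sigA X A ν1).toReal with hτ1
        set τ2 := (sigA X A ν2).toReal with hτ2
        have hσ1 : sigA X A ν1 = (τ1 : EReal) := (EReal.coe_toReal hσ1top hσ1bot).symm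
        have hσ2 : sigA X A ν2 = (τ2 : EReal) := (EReal.coe_toReal hσ2top hσ2bot).symm
        have hsum : sigA X A l = ((θ * τ1 + (1 - θ) * τ2 : ℝ) : EReal) := by
          rw [haffθ, hσ1, hσ2, ← EReal.coe_mul, ← EReal.coe_mul, ← EReal.coe_add]
        have hτl : (sigA X A l).toReal = θ * τ1 + (1 - θ) * τ2 := by
          rw [hsum, EReal.toReal_coe]
        -- build the two pieces of z
        set u : (Fin m → ℝ) × ℝ := (c * θ) • ((ν1, τ1) : (Fin m → ℝ) × ℝ) with hu_def
        set w : (Fin m → ℝ) × ℝ := (c * (1 - θ)) • ((ν2, τ2) : (Fin m → ℝ) × ℝ) with hw_def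
        have hbase1 : ((ν1, τ1) : (Fin m → ℝ) × ℝ) ∈ auxE X A b :=
          ⟨hν1, fun x hx => dotp_le_toReal hXne A ν1 hσ1top hx⟩
        have hbase2 : ((ν2, τ2) : (Fin m → ℝ) × ℝ) ∈ auxE X A b :=
          ⟨hν2, fun x hx => dotp_le_toReal hXne A ν2 hσ2top hx⟩
        have hu : u ∈ auxE X A b := auxE_smul hbase1 (mul_nonneg hc.le hθ.1.le)
        have hw : w ∈ auxE X A b := auxE_smul hbase2 (mul_nonneg hc.le hθ1.le)
        have huw : u + w = z := by
          apply Prod.ext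
          · show (c * θ) • ν1 + (c * (1 - θ)) • ν2 = z.1
            rw [hz1cl, hleq, smul_add, smul_smul, smul_smul]
          · show (c * θ) * τ1 + (c * (1 - θ)) * τ2 = z.2
            rw [hz2τ, hτcl, hτl]; ring
        obtain ⟨hueq, hweq⟩ := hray u hu w hw huw
        have hu1 : (c * θ) • ν1 = auxl A x₀ b u • z.1 := congrArg Prod.fst hueq
        have hw1 : (c * (1 - θ)) • ν2 = auxl A x₀ b w • z.1 := congrArg Prod.fst hweq
        have hν1z : ν1 = ((c * θ)⁻¹ * auxl A x₀ b u) • z.1 := by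
          have hcθ : (c * θ) ≠ 0 := (mul_pos hc hθ.1).ne'
          rw [mul_smul, ← hu1, smul_smul, inv_mul_cancel₀ hcθ, one_smul]
        have hν2z : ν2 = ((c * (1 - θ))⁻¹ * auxl A x₀ b w) • z.1 := by
          have hcθ : (c * (1 - θ)) ≠ 0 := (mul_pos hc hθ1).ne'
          rw [mul_smul, ← hw1, smul_smul, inv_mul_cancel₀ hcθ, one_smul]
        apply hnp
        set a1 := (c * θ)⁻¹ * auxl A x₀ b u with ha1
        set a2 := (c * (1 - θ))⁻¹ * auxl A x₀ b w with ha2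
        by_cases ha20 : a2 = 0
        · exact ⟨0, Or.inr (by rw [hν2z, ha20, zero_smul, zero_smul])⟩
        · refine ⟨a1 / a2, Or.inl ?_⟩
          rw [hν1z, hν2z, smul_smul, div_mul_cancel₀ _ ha20]
    -- conclude
    have hlLam : l ∈ Lambda X A := Set.mem_iUnion.2 ⟨b, hcirc, hlb⟩
    have hzphi : z = c • phiVec X A l := by
      apply Prod.ext
      · show z.1 = c • l; exact hz1cl
      · show z.2 = c * (sigA X A l).toReal
        rw [hz2τ, hτcl]
    rw [hzphi]
    exact coneHull_smul_single_mem
      (Set.mem_union_left _ (Set.mem_image_of_mem _ hlLam)) hc.le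

lemma auxE_subset_graph (hXne : X.Nonempty) (b : Fin m) :
    auxE X A b ⊆ circuitGraph X A := by
  obtain ⟨x₀, hx₀⟩ := hXne
  intro p hp
  set t := auxl A x₀ b p with ht_def
  have ht0 : 0 ≤ t := auxl_nonneg hx₀ hp
  rcases eq_or_lt_of_le ht0 with ht | ht
  · rw [auxl_eq_zero_imp hx₀ hp ht.symm]
    exact coneHull_zero_mem
  · have hq : t⁻¹ • p ∈ auxB X A x₀ b := by
      refine ⟨auxE_smul hp (inv_pos.2 ht).le, ?_⟩
      simp only [Set.mem_setOf_eq]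
      rw [auxl_smul, ← ht_def, inv_mul_cancel₀ ht.ne']
    have hmink := aux_minkowski (auxB_compact hx₀) auxB_convex hq
    have hsub : (auxB X A x₀ b).extremePoints ℝ ⊆ circuitGraph X A :=
      fun z hz => extreme_mem_graph ⟨x₀, hx₀⟩ hx₀ hz
    have : t⁻¹ • p ∈ circuitGraph X A :=
      convexHull_min hsub coneHull_convex hmink
    have h2 : t • (t⁻¹ • p) ∈ circuitGraph X A := coneHull_smul_mem this ht.le
    rw [smul_smul, mul_inv_cancel₀ ht.ne', one_smul] at h2
    exact h2

lemma auxK_subset_graph (hXne : X.Nonempty) : auxK X A ⊆ circuitGraph X A := by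
  rintro p ⟨f, hf, rfl⟩
  exact coneHull_sum_mem fun j => auxE_subset_graph hXne j (hf j)

end Extreme

section Pointed
set_option maxHeartbeats 1000000
variable {n m : ℕ} {X : Set (Fin n → ℝ)} {A : Fin m → Fin n → ℝ}

lemma aux_distinct (hLI : ExpLinIndep X A) {x₀ : Fin n → ℝ} (hx₀ : x₀ ∈ X)
    {i j : Fin m} (hij : i ≠ j) :
    ∃ x ∈ X, dotp (A i) x - dotp (A i) x₀ ≠ dotp (A j) x - dotp (A j) x₀ := by
  by_contra habs
  push_neg at habs
  set K := dotp (A i) x₀ - dotp (A j) x₀ with hK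
  have hrel : ∀ x ∈ X, Real.exp (dotp (A i) x) = Real.exp K * Real.exp (dotp (A j) x) := by
    intro x hx
    rw [← Real.exp_add]
    congr 1
    have := habs x hx
    simp only [hK]
    linarith
  set g : Fin m → ℝ := fun k => if k = i then 1 else if k = j then -Real.exp K else 0 with hg
  have hzero : ∑ k, g k • (fun x : X => Real.exp (dotp (A k) (x : Fin n → ℝ))) = 0 := by
    funext x
    rw [Finset.sum_apply]
    simp only [Pi.smul_apply, smul_eq_mul, Pi.zero_apply]
    have hterm : ∀ k, g k * Real.exp (dotp (A k) (x : Fin n → ℝ)) =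
        (if k = i then Real.exp (dotp (A i) (x : Fin n → ℝ)) else 0) +
        (if k = j then -Real.exp K * Real.exp (dotp (A j) (x : Fin n → ℝ)) else 0) := by
      intro k
      by_cases hki : k = i
      · subst hki
        simp [hg, hij]
      · by_cases hkj : k = j
        · subst hkj
          simp [hg, Ne.symm hij, hki]
        · simp [hg, hki, hkj]
    rw [Finset.sum_congr rfl fun k _ => hterm k, Finset.sum_add_distrib,
      Finset.sum_ite_eq' Finset.univ i, Finset.sum_ite_eq' Finset.univ j]
    simp only [Finset.mem_univ, if_true]
    rw [hrel x x.2]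
    ring
  have hg0 := Fintype.linearIndependent_iff.1 hLI g hzero i
  simp [hg] at hg0

lemma aux_pointed (hXne : X.Nonempty) (hLI : ExpLinIndep X A)
    (f : Fin m → (Fin m → ℝ) × ℝ) (hf : ∀ b, f b ∈ auxE X A b)
    (hsum : ∑ b, f b = 0) : ∀ b, f b = 0 := by
  obtain ⟨x₀, hx₀⟩ := hXne
  set μ : Fin m → Fin m → ℝ := fun b => (f b).1 with hμ
  set s : Fin m → ℝ := fun b => (f b).2 with hs
  have hμsum : ∑ b, μ b = 0 := by
    have h := congrArg Prod.fst hsum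
    rw [Prod.fst_sum] at h
    exact h
  have hssum : ∑ b, s b = 0 := by
    have h := congrArg Prod.snd hsum
    rw [Prod.snd_sum] at h
    exact h
  have hge : ∀ b, ∀ x ∈ X, 0 ≤ s b + auxg A (μ b) x := by
    intro b x hx
    have h := (hf b).2 x hx
    rw [dotp_neg_Amap] at h
    simp only [hμ, hs]
    linarith
  have heq : ∀ x ∈ X, ∀ b, s b + auxg A (μ b) x = 0 := by
    intro x hx
    have htot : ∑ b, (s b + auxg A (μ b) x) = 0 := by
      rw [Finset.sum_add_distrib, hssum, ← auxg_sum, hμsum, auxg_zero, add_zero]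
    intro b
    exact (Finset.sum_eq_zero_iff_of_nonneg (fun b _ => hge b x hx)).1 htot b (Finset.mem_univ b)
  have hconst : ∀ b, ∀ x ∈ X, auxg A (μ b) x = auxg A (μ b) x₀ := by
    intro b x hx
    have h1 := heq x hx b
    have h2 := heq x₀ hx₀ b
    linarith
  -- witnesses for distinctness
  have hwit : ∀ p : Fin m × Fin m, ∃ x, x ∈ X ∧ (p.1 ≠ p.2 →
      dotp (A p.1) x - dotp (A p.1) x₀ ≠ dotp (A p.2) x - dotp (A p.2) x₀) := by
    intro p
    by_cases hp : p.1 = p.2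
    · exact ⟨x₀, hx₀, fun h => absurd hp h⟩
    · obtain ⟨x, hx1, hx2⟩ := aux_distinct hLI hx₀ hp
      exact ⟨x, hx1, fun _ => hx2⟩
  choose wx hwX hwne using hwit
  set D : Fin m → Fin m × Fin m → ℝ := fun a p => dotp (A a) (wx p) - dotp (A a) x₀ with hD
  have hDrel : ∀ b p, ∑ a, μ b a * D a p = 0 := by
    intro b p
    have h1 : auxg A (μ b) (wx p) - auxg A (μ b) x₀ = ∑ a, μ b a * D a p := by
      simp only [auxg, hD, mul_sub]
      rw [← Finset.sum_sub_distrib]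
    rw [← h1, hconst b (wx p) (hwX p)]
    ring
  have hrow : ∀ b, ∑ a, μ b a = 0 := fun b => (hf b).1.2
  have hcol : ∀ a, ∑ b, μ b a = 0 := by
    intro a
    have h := congrFun hμsum a
    rw [Finset.sum_apply] at h
    exact h
  -- key computation
  have claim1 : ∀ b, ∑ a, μ b a * (∑ p, (D a p - D b p)^2) =
      ∑ a, μ b a * (∑ p, (D a p)^2) := by
    intro b
    have hexp : ∀ a, ∑ p, (D a p - D b p)^2 =
        (∑ p, (D a p)^2) - 2 * (∑ p, D a p * D b p) + ∑ p, (D b p)^2 := by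
      intro a
      rw [Finset.mul_sum, ← Finset.sum_sub_distrib, ← Finset.sum_add_distrib]
      exact Finset.sum_congr rfl fun p _ => by ring
    rw [Finset.sum_congr rfl fun a _ => by rw [hexp a]]
    have hsplit : ∑ a, μ b a * ((∑ p, (D a p)^2) - 2 * (∑ p, D a p * D b p) + ∑ p, (D b p)^2)
        = (∑ a, μ b a * (∑ p, (D a p)^2)) - 2 * (∑ a, μ b a * (∑ p, D a p * D b p))
          + (∑ a, μ b a) * (∑ p, (D b p)^2) := by
      rw [Finset.sum_mul, Finset.mul_sum, ← Finset.sum_sub_distrib, ← Finset.sum_add_distrib]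
      exact Finset.sum_congr rfl fun a _ => by ring
    rw [hsplit, hrow b, zero_mul, add_zero]
    have hcross : ∑ a, μ b a * (∑ p, D a p * D b p) = 0 := by
      have h1 : ∑ a, μ b a * (∑ p, D a p * D b p) = ∑ p, (∑ a, μ b a * D a p) * D b p := by
        simp only [Finset.mul_sum, Finset.sum_mul]
        rw [Finset.sum_comm]
        exact Finset.sum_congr rfl fun p _ => Finset.sum_congr rfl fun a _ => by ring
      rw [h1]
      exact Finset.sum_eq_zero fun p _ => by rw [hDrel b p, zero_mul]
    rw [hcross, mul_zero, sub_zero]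
  have claim2 : ∑ b, ∑ a, μ b a * (∑ p, (D a p)^2) = 0 := by
    rw [Finset.sum_comm]
    exact Finset.sum_eq_zero fun a _ => by rw [← Finset.sum_mul, hcol a, zero_mul]
  have htotal : ∑ b, ∑ a, μ b a * (∑ p, (D a p - D b p)^2) = 0 := by
    rw [Finset.sum_congr rfl fun b _ => claim1 b]
    exact claim2
  have hterm_nonneg : ∀ b a, 0 ≤ μ b a * (∑ p, (D a p - D b p)^2) := by
    intro b a
    by_cases hab : a = b
    · rw [hab]
      simp
    · exact mul_nonneg ((hf b).1.1 a hab) (Finset.sum_nonneg fun p _ => sq_nonneg _)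
  have hinner_zero : ∀ b, ∑ a, μ b a * (∑ p, (D a p - D b p)^2) = 0 := by
    intro b
    have := (Finset.sum_eq_zero_iff_of_nonneg
      (fun b _ => Finset.sum_nonneg fun a _ => hterm_nonneg b a)).1 htotal b (Finset.mem_univ b)
    exact this
  have hμ_offdiag : ∀ b a, a ≠ b → μ b a = 0 := by
    intro b a hab
    have hterm_zero : μ b a * (∑ p, (D a p - D b p)^2) = 0 :=
      (Finset.sum_eq_zero_iff_of_nonneg (fun a _ => hterm_nonneg b a)).1
        (hinner_zero b) a (Finset.mem_univ a)
    have hQ : 0 < ∑ p, (D a p - D b p)^2 := by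
      have hne : D a (a, b) - D b (a, b) ≠ 0 := by
        have := hwne (a, b) hab
        simp only [hD]
        intro h
        apply this
        linarith [sub_eq_zero.1 h]
      have h1 : 0 < (D a (a, b) - D b (a, b))^2 := pow_two_pos_of_ne_zero hne
      have h2 : (D a (a, b) - D b (a, b))^2 ≤ ∑ p, (D a p - D b p)^2 :=
        Finset.single_le_sum (f := fun p : Fin m × Fin m => (D a p - D b p)^2)
          (fun p _ => sq_nonneg _) (Finset.mem_univ (a, b))
      linarith
    rcases mul_eq_zero.1 hterm_zero with h | h
    · exact h
    · exact absurd h hQ.ne'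
  have hμ_zero : ∀ b, μ b = 0 := by
    intro b
    funext a
    by_cases hab : a = b
    · rw [hab]
      have := hrow b
      rw [← Finset.add_sum_erase Finset.univ (μ b) (Finset.mem_univ b)] at this
      have hrest : ∑ a ∈ Finset.univ.erase b, μ b a = 0 :=
        Finset.sum_eq_zero fun a ha => hμ_offdiag b a (Finset.ne_of_mem_erase ha)
      simp only [Pi.zero_apply]
      linarith
    · exact hμ_offdiag b a hab
  intro b
  have hs0 : s b = 0 := by
    have := heq x₀ hx₀ b
    rw [hμ_zero b, auxg_zero] at this
    linarith
  have : f b = (μ b, s b) := rfl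
  rw [this, hμ_zero b, hs0]
  rfl

end Pointed

-- ============ closedness of the sum cone ============
section ClosedK
set_option maxHeartbeats 1000000
variable {n m : ℕ} {X : Set (Fin n → ℝ)} {A : Fin m → Fin n → ℝ}

lemma auxK_closed (hXne : X.Nonempty) (hLI : ExpLinIndep X A) :
    IsClosed (auxK X A) := by
  rw [← isSeqClosed_iff_isClosed]
  intro u p hu hup
  choose F hF using hu
  have hF1 : ∀ k b, F k b ∈ auxE X A b := fun k => (hF k).1
  have hF2 : ∀ k, u k = ∑ b, F k b := fun k => (hF k).2
  set r : ℕ → ℝ := fun k => ∑ b, ‖F k b‖ with hr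
  have hr_nonneg : ∀ k, 0 ≤ r k := fun k => Finset.sum_nonneg fun b _ => norm_nonneg _
  have hclosed_mem : IsClosed {g : Fin m → (Fin m → ℝ) × ℝ | ∀ b, g b ∈ auxE X A b} := by
    have : {g : Fin m → (Fin m → ℝ) × ℝ | ∀ b, g b ∈ auxE X A b} =
        ⋂ b, (fun g : Fin m → (Fin m → ℝ) × ℝ => g b) ⁻¹' auxE X A b := by
      ext g; simp
    rw [this]
    exact isClosed_iInter fun b => (auxE_closed X A b).preimage (continuous_apply b)
  have hnormsum_cont : Continuous (fun g : Fin m → (Fin m → ℝ) × ℝ => ∑ b, ‖g b‖) :=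
    continuous_finset_sum _ fun b _ => (continuous_apply b).norm
  by_cases hbd : ∃ C : ℝ, ∃ᶠ k in Filter.atTop, r k ≤ C
  · obtain ⟨C, hC⟩ := hbd
    obtain ⟨φ, hφmono, hφle⟩ := Filter.extraction_of_frequently_atTop hC
    set Sc := {g : Fin m → (Fin m → ℝ) × ℝ | (∀ b, g b ∈ auxE X A b) ∧ ∑ b, ‖g b‖ ≤ C}
      with hSc
    have hScomp : IsCompact Sc := by
      apply Metric.isCompact_of_isClosed_isBounded
      · exact hclosed_mem.inter (isClosed_le hnormsum_cont continuous_const)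
      · rw [Metric.isBounded_iff_subset_closedBall 0]
        refine ⟨max C 0, fun g hg => ?_⟩
        rw [Metric.mem_closedBall, dist_zero_right]
        apply pi_norm_le_iff_of_nonneg (le_max_right C 0) |>.2
        intro b
        calc ‖g b‖ ≤ ∑ b', ‖g b'‖ :=
              Finset.single_le_sum (f := fun b' => ‖g b'‖)
                (fun b' _ => norm_nonneg _) (Finset.mem_univ b)
          _ ≤ C := hg.2
          _ ≤ max C 0 := le_max_left C 0
    have hmem : ∀ j, F (φ j) ∈ Sc := fun j => ⟨hF1 (φ j), hφle j⟩
    obtain ⟨g, hgS, ψ, hψ, hψt⟩ := hScomp.tendsto_subseq hmem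
    have h1 : Filter.Tendsto (fun j => u (φ (ψ j))) Filter.atTop (nhds p) :=
      hup.comp ((hφmono.comp hψ).tendsto_atTop)
    have h2 : Filter.Tendsto (fun j => ∑ b, F (φ (ψ j)) b) Filter.atTop (nhds (∑ b, g b)) := by
      apply tendsto_finset_sum
      intro b _
      exact ((continuous_apply b).tendsto g).comp hψt
    have h3 : (fun j => u (φ (ψ j))) = fun j => ∑ b, F (φ (ψ j)) b := by
      funext j; exact hF2 (φ (ψ j))
    rw [h3] at h1
    exact ⟨g, hgS.1, tendsto_nhds_unique h1 h2⟩
  · push_neg at hbd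
    have htend : Filter.Tendsto r Filter.atTop Filter.atTop := by
      apply Filter.tendsto_atTop.2
      intro C
      have := hbd C
      exact this.mono fun k hk => hk.le
    obtain ⟨K₀, hK₀⟩ := Filter.eventually_atTop.1 (htend.eventually_ge_atTop 1)
    have hrpos : ∀ j : ℕ, 0 < r (j + K₀) :=
      fun j => lt_of_lt_of_le zero_lt_one (hK₀ _ (Nat.le_add_left K₀ j))
    set G : ℕ → Fin m → (Fin m → ℝ) × ℝ := fun j => (r (j + K₀))⁻¹ • F (j + K₀) with hG
    set Tc := {g : Fin m → (Fin m → ℝ) × ℝ | (∀ b, g b ∈ auxE X A b) ∧ ∑ b, ‖g b‖ = 1}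
      with hTc
    have hTcomp : IsCompact Tc := by
      apply Metric.isCompact_of_isClosed_isBounded
      · exact hclosed_mem.inter (isClosed_eq hnormsum_cont continuous_const)
      · rw [Metric.isBounded_iff_subset_closedBall 0]
        refine ⟨1, fun g hg => ?_⟩
        rw [Metric.mem_closedBall, dist_zero_right]
        apply pi_norm_le_iff_of_nonneg zero_le_one |>.2
        intro b
        calc ‖g b‖ ≤ ∑ b', ‖g b'‖ :=
              Finset.single_le_sum (f := fun b' => ‖g b'‖)
                (fun b' _ => norm_nonneg _) (Finset.mem_univ b)
          _ = 1 := hg.2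
    have hGT : ∀ j, G j ∈ Tc := by
      intro j
      constructor
      · intro b
        exact auxE_smul (hF1 _ b) (inv_pos.2 (hrpos j)).le
      · have : ∀ b, ‖G j b‖ = (r (j + K₀))⁻¹ * ‖F (j + K₀) b‖ := by
          intro b
          simp only [hG, Pi.smul_apply, norm_smul, Real.norm_eq_abs,
            abs_of_pos (inv_pos.2 (hrpos j))]
        rw [Finset.sum_congr rfl fun b _ => this b, ← Finset.mul_sum]
        exact inv_mul_cancel₀ (hrpos j).ne'
    obtain ⟨g, hgT, ψ, hψ, hψt⟩ := hTcomp.tendsto_subseq hGT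
    have hmap : Filter.Tendsto (fun j => ψ j + K₀) Filter.atTop Filter.atTop :=
      Filter.tendsto_atTop_mono (fun j => Nat.le_add_right (ψ j) K₀) hψ.tendsto_atTop
    have hsum0 : ∑ b, g b = 0 := by
      have hA : Filter.Tendsto (fun j => ∑ b, G (ψ j) b) Filter.atTop (nhds (∑ b, g b)) := by
        apply tendsto_finset_sum
        intro b _
        exact ((continuous_apply b).tendsto g).comp hψt
      have hB : (fun j => ∑ b, G (ψ j) b) =
          fun j => (r (ψ j + K₀))⁻¹ • u (ψ j + K₀) := by
        funext j
        rw [hF2 (ψ j + K₀), Finset.smul_sum]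
        rfl
      have hC : Filter.Tendsto (fun j => (r (ψ j + K₀))⁻¹ • u (ψ j + K₀))
          Filter.atTop (nhds ((0:ℝ) • p)) := by
        apply Filter.Tendsto.smul
        · exact (htend.comp hmap).inv_tendsto_atTop
        · exact hup.comp hmap
      rw [zero_smul] at hC
      rw [hB] at hA
      exact tendsto_nhds_unique hA hC
    have hzero := aux_pointed hXne hLI g hgT.1 hsum0
    have : ∑ b, ‖g b‖ = 0 := Finset.sum_eq_zero fun b _ => by rw [hzero b, norm_zero]
    rw [hgT.2] at this
    norm_num at this

end ClosedK


theorem statement15 {n m : ℕ} (X : Set (Fin n → ℝ)) (hXne : X.Nonempty) (hXcl : IsClosed X)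
    (hXcv : Convex ℝ X) (A : Fin m → Fin n → ℝ) (hA : Function.Injective A) (hm : 0 < m)
    (hLI : ExpLinIndep X A) :
    IsClosed (circuitGraph X A) := by
  have h1 : circuitGraph X A = auxK X A :=
    Set.Subset.antisymm (graph_subset_auxK hXne hm) (auxK_subset_graph hXne)
  rw [h1]
  exact auxK_closed hXne hLI
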